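/- (Theorem 2(iv), fluid model) Suppose λ_a/(2μ_a) + λ_b/μ_b < T ≤ λ_a/μ_a + λ_b/μ_b. Set α := (2μ_a/λ_a)(λ_a/μ_a + λ_b/μ_b − T), t_a := λ_a α/(2μ_a), and t_b := T − λ_b/μ_b. Define F_a(t) = α for t ∈ [0,t_a), F_a(t) = α + (μ_a/λ_a)(t − t_a) for t ∈ [t_a,t_b], F_a(t) = 1 for t ∈ [t_b,T]; and F_b(t) = 0 for t ∈ [0,t_b), F_b(t) = (μ_b/λ_b)(t − t_b) for t ∈ [t_b,T]. Then: 0 ≤ α < 1; 0 ≤ t_a < t_b < T; F_a(t_b) = 1; F_b(T) = 1; and with q_0 = λ_a α/2 one has: q_a(t) = q_0 for all t ∈ [t_a,t_b], q_a(t) ≥ q_0 for all t ∈ (0,t_a) ∪ (t_b,T], q_b(t) = λ_a − μ_b t_b for all t ∈ [t_b,T], q_b(t) ≥ λ_a − μ_b t_b for all t ∈ (0,t_b), and q_0 ≥ λ_a − μ_b t_b. Consequently (F_a,F_b) is a Nash equilibrium of the fluid arrival game. -/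

import Mathlib

/-- Extension of a cdf `F` defined on `[0,T]` to all of `ℝ`. -/
noncomputable def Fext (T : ℝ) (F : ℝ → ℝ) (t : ℝ) : ℝ :=
  if t < 0 then 0 else if t ≤ T then F t else F T

/-- Support of the Borel measure on `[0,T]` induced by the cdf `F`:
points every neighbourhood of which carries positive mass. -/
def fluidSupport (T : ℝ) (F : ℝ → ℝ) : Set ℝ :=
  {t | t ∈ Set.Icc 0 T ∧ ∀ ε > 0, Fext T F (t - ε) < Fext T F (t + ε)}

/-- Queue (cost) faced by a belief-`mu` customer arriving at time `t`:
`q_0 = (λ_a F_a(0) + λ_b F_b(0))/2` at the opening, and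
`q(t) = λ_a F_a(t) + λ_b F_b(t) - μ t` for `t > 0`. -/
noncomputable def cost (la lb mu : ℝ) (Fa Fb : ℝ → ℝ) (t : ℝ) : ℝ :=
  if t = 0 then (la * Fa 0 + lb * Fb 0) / 2
  else la * Fa t + lb * Fb t - mu * t

/-- Nash equilibrium of the fluid arrival game: on the support of its own arrival
distribution each type's queue is minimal over all times in `[0,T]`. -/
def IsFluidNash (la lb mua mub T : ℝ) (Fa Fb : ℝ → ℝ) : Prop :=
  (∀ t ∈ fluidSupport T Fa, ∀ s ∈ Set.Icc 0 T,
    cost la lb mua Fa Fb t ≤ cost la lb mua Fa Fb s) ∧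
  (∀ t ∈ fluidSupport T Fb, ∀ s ∈ Set.Icc 0 T,
    cost la lb mub Fa Fb t ≤ cost la lb mub Fa Fb s)


set_option maxHeartbeats 2000000 in
/-- Theorem 2(iv) of the fluid model: for `λ_a/(2μ_a)+λ_b/μ_b < T ≤ λ_a/μ_a+λ_b/μ_b`,
type-`a` customers place mass `α` at `0` and arrive with density `μ_a/λ_a` on
`[t_a,t_b]`, type-`b` customers arrive with density `μ_b/λ_b` on `[t_b,T]`;
this is a Nash equilibrium. -/
theorem fluid_equilibrium_case_iv
    (la lb mua mub T alpha ta tb : ℝ)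
    (hla : 0 < la) (hlb : 0 < lb) (hmua : 0 < mua) (hmu : mua < mub)
    (hT1 : la / (2 * mua) + lb / mub < T) (hT2 : T ≤ la / mua + lb / mub)
    (halpha : alpha = (2 * mua / la) * (la / mua + lb / mub - T))
    (hta : ta = la * alpha / (2 * mua))
    (htb : tb = T - lb / mub)
    (Fa Fb : ℝ → ℝ)
    (hFa1 : ∀ t ∈ Set.Icc (0:ℝ) T, t < ta → Fa t = alpha)
    (hFa2 : ∀ t ∈ Set.Icc (0:ℝ) T, ta ≤ t → t ≤ tb → Fa t = alpha + (mua / la) * (t - ta))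
    (hFa3 : ∀ t ∈ Set.Icc (0:ℝ) T, tb ≤ t → Fa t = 1)
    (hFb1 : ∀ t ∈ Set.Icc (0:ℝ) T, t < tb → Fb t = 0)
    (hFb2 : ∀ t ∈ Set.Icc (0:ℝ) T, tb ≤ t → Fb t = (mub / lb) * (t - tb)) :
    0 ≤ alpha ∧ alpha < 1 ∧ 0 ≤ ta ∧ ta < tb ∧ tb < T ∧
    Fa tb = 1 ∧ Fb T = 1 ∧
    (la * Fa 0 + lb * Fb 0) / 2 = la * alpha / 2 ∧
    (∀ t ∈ Set.Icc ta tb,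
      la * Fa t + lb * Fb t - mua * t = la * alpha / 2) ∧
    (∀ t ∈ Set.Ioo (0:ℝ) ta ∪ Set.Ioc tb T,
      la * alpha / 2 ≤ la * Fa t + lb * Fb t - mua * t) ∧
    (∀ t ∈ Set.Icc tb T,
      la * Fa t + lb * Fb t - mub * t = la - mub * tb) ∧
    (∀ t ∈ Set.Ioo (0:ℝ) tb,
      la - mub * tb ≤ la * Fa t + lb * Fb t - mub * t) ∧
    la - mub * tb ≤ la * alpha / 2 ∧
    IsFluidNash la lb mua mub T Fa Fb := by
  have hmub : 0 < mub := hmua.trans hmu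
  have hlane : la ≠ 0 := ne_of_gt hla
  have hlbne : lb ≠ 0 := ne_of_gt hlb
  have hmuane : mua ≠ 0 := ne_of_gt hmua
  have hmubne : mub ≠ 0 := ne_of_gt hmub
  have hta' : ta = la / mua + lb / mub - T := by
    rw [hta, halpha]; field_simp
  have hlbmub : 0 < lb / mub := div_pos hlb hmub
  have htbT : tb < T := by rw [htb]; linarith
  have htatb : ta < tb := by
    have h2 : la / (2 * mua) = la / mua / 2 := by
      rw [div_div, mul_comm]
    rw [hta', htb]; rw [h2] at hT1; linarith
  have keyA : la * alpha = 2 * mua * ta := by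
    rw [hta]; field_simp
  have keyL : mua * (ta + tb) = la := by
    rw [hta', htb]; field_simp; ring
  have keyB : mub * (T - tb) = lb := by
    rw [htb]; field_simp; ring
  have halpha0 : 0 ≤ alpha := by
    rw [halpha]
    exact mul_nonneg (by positivity) (by linarith)
  have hta0 : 0 ≤ ta := by nlinarith [mul_nonneg hla.le halpha0, keyA]
  have halpha1 : alpha < 1 := by nlinarith [keyA, keyL]
  have htb0 : 0 < tb := lt_of_le_of_lt hta0 htatb
  have hT0 : 0 ≤ T := by linarith
  have hq0' : la * alpha / 2 = la - mua * tb := by linarith [keyA, keyL]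
  have qfin : la - mub * tb ≤ la * alpha / 2 := by
    have := mul_le_mul_of_nonneg_right hmu.le htb0.le
    linarith
  have hFbz : ∀ t ∈ Set.Icc (0:ℝ) T, t ≤ tb → Fb t = 0 := by
    intro t ht h
    rcases lt_or_eq_of_le h with h' | h'
    · exact hFb1 t ht h'
    · rw [hFb2 t ht h'.ge, h']; ring
  have hFa0 : Fa 0 = alpha := by
    rcases eq_or_lt_of_le hta0 with h | h
    · rw [hFa2 0 ⟨le_rfl, hT0⟩ h.ge (by linarith), ← h]; ring
    · exact hFa1 0 ⟨le_rfl, hT0⟩ h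
  have hFb0 : Fb 0 = 0 := hFbz 0 ⟨le_rfl, hT0⟩ htb0.le
  have hFatb : Fa tb = 1 := by
    rw [hFa2 tb ⟨htb0.le, htbT.le⟩ htatb.le le_rfl]
    field_simp
    linarith [keyA, keyL]
  have hFbT : Fb T = 1 := by
    rw [hFb2 T ⟨hT0, le_rfl⟩ htbT.le]
    field_simp
    linarith [keyB]
  have eA : ∀ t : ℝ, la * (alpha + mua / la * (t - ta)) = la * alpha + mua * (t - ta) := by
    intro t; field_simp
  have eB : ∀ t : ℝ, lb * (mub / lb * (t - tb)) = mub * (t - tb) := by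
    intro t; field_simp
  have partA1 : ∀ t ∈ Set.Icc ta tb, la * Fa t + lb * Fb t - mua * t = la * alpha / 2 := by
    intro t ht
    obtain ⟨h1, h2⟩ := ht
    have ht' : t ∈ Set.Icc (0:ℝ) T := ⟨hta0.trans h1, h2.trans htbT.le⟩
    rw [hFa2 t ht' h1 h2, hFbz t ht' h2, eA]
    linarith [keyA]
  have partA2 : ∀ t ∈ Set.Ioo (0:ℝ) ta ∪ Set.Ioc tb T,
      la * alpha / 2 ≤ la * Fa t + lb * Fb t - mua * t := by
    intro t ht
    rcases ht with ⟨h1, h2⟩ | ⟨h1, h2⟩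
    · have ht' : t ∈ Set.Icc (0:ℝ) T := ⟨h1.le, by linarith⟩
      rw [hFa1 t ht' h2, hFbz t ht' (by linarith)]
      have := mul_lt_mul_of_pos_left h2 hmua
      linarith [keyA]
    · have ht' : t ∈ Set.Icc (0:ℝ) T := ⟨by linarith, h2⟩
      rw [hFa3 t ht' h1.le, hFb2 t ht' h1.le, eB]
      have h3 : (0:ℝ) ≤ (mub - mua) * (t - tb) :=
        mul_nonneg (by linarith) (by linarith)
      linarith [hq0']
  have partB1 : ∀ t ∈ Set.Icc tb T, la * Fa t + lb * Fb t - mub * t = la - mub * tb := by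
    intro t ht
    obtain ⟨h1, h2⟩ := ht
    have ht' : t ∈ Set.Icc (0:ℝ) T := ⟨htb0.le.trans h1, h2⟩
    rw [hFa3 t ht' h1, hFb2 t ht' h1, eB]
    ring
  have partB2 : ∀ t ∈ Set.Ioo (0:ℝ) tb, la - mub * tb ≤ la * Fa t + lb * Fb t - mub * t := by
    intro t ht
    obtain ⟨h1, h2⟩ := ht
    have ht' : t ∈ Set.Icc (0:ℝ) T := ⟨h1.le, by linarith⟩
    rw [hFbz t ht' h2.le]
    rcases lt_or_ge t ta with h | h
    · rw [hFa1 t ht' h]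
      have h3 : (0:ℝ) ≤ (mub - mua) * (tb - ta) :=
        mul_nonneg (by linarith) (by linarith)
      have h4 : (0:ℝ) ≤ mub * (ta - t) := mul_nonneg hmub.le (by linarith)
      linarith [keyA, keyL]
    · rw [hFa2 t ht' h h2.le, eA]
      have h3 : (0:ℝ) ≤ (mub - mua) * (tb - t) :=
        mul_nonneg (by linarith) (by linarith)
      linarith [keyA, keyL]
  have costA_ge : ∀ s ∈ Set.Icc (0:ℝ) T, la * alpha / 2 ≤ cost la lb mua Fa Fb s := by
    intro s hs
    by_cases h0 : s = 0
    · rw [h0]; unfold cost; rw [if_pos rfl, hFa0, hFb0]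
      linarith [hlb.le, mul_nonneg hlb.le (le_refl (0:ℝ))]
    · unfold cost; rw [if_neg h0]
      have hs0 : 0 < s := lt_of_le_of_ne hs.1 (Ne.symm h0)
      rcases lt_or_ge s ta with h | h
      · exact partA2 s (Or.inl ⟨hs0, h⟩)
      · rcases le_or_gt s tb with h' | h'
        · exact (partA1 s ⟨h, h'⟩).ge
        · exact partA2 s (Or.inr ⟨h', hs.2⟩)
  have costB_ge : ∀ s ∈ Set.Icc (0:ℝ) T, la - mub * tb ≤ cost la lb mub Fa Fb s := by
    intro s hs
    by_cases h0 : s = 0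
    · rw [h0]; unfold cost; rw [if_pos rfl, hFa0, hFb0]
      linarith [qfin]
    · unfold cost; rw [if_neg h0]
      have hs0 : 0 < s := lt_of_le_of_ne hs.1 (Ne.symm h0)
      rcases lt_or_ge s tb with h | h
      · exact partB2 s ⟨hs0, h⟩
      · exact (partB1 s ⟨h, hs.2⟩).ge
  have hFext : ∀ (F : ℝ → ℝ) (x : ℝ), 0 ≤ x → x ≤ T → Fext T F x = F x := by
    intro F x h0 h1
    unfold Fext
    rw [if_neg (not_lt.mpr h0), if_pos h1]
  have hFextGT : ∀ (F : ℝ → ℝ) (x : ℝ), T < x → Fext T F x = F T := by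
    intro F x h
    unfold Fext
    rw [if_neg (by linarith), if_neg (not_le.mpr h)]
  have hFextNeg : ∀ (F : ℝ → ℝ) (x : ℝ), x < 0 → Fext T F x = 0 := by
    intro F x h; unfold Fext; rw [if_pos h]
  have suppA : ∀ t ∈ fluidSupport T Fa, cost la lb mua Fa Fb t = la * alpha / 2 := by
    intro t ht
    obtain ⟨htIcc, hsupp⟩ := ht
    obtain ⟨htl, htr⟩ := htIcc
    by_cases h0 : t = 0
    · unfold cost; rw [if_pos h0, hFa0, hFb0]; ring
    · have ht0 : 0 < t := lt_of_le_of_ne htl (Ne.symm h0)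
      unfold cost; rw [if_neg h0]
      apply partA1
      constructor
      · by_contra h
        push_neg at h
        set ε := min t (ta - t) / 2 with hε
        have hε0 : 0 < ε := by
          apply div_pos _ two_pos
          exact lt_min ht0 (by linarith)
        have hm1 : min t (ta - t) ≤ t := min_le_left _ _
        have hm2 : min t (ta - t) ≤ ta - t := min_le_right _ _
        have e1 : Fext T Fa (t - ε) = alpha := by
          rw [hFext Fa _ (by linarith) (by linarith)]
          exact hFa1 _ ⟨by linarith, by linarith⟩ (by linarith)
        have e2 : Fext T Fa (t + ε) = alpha := by
          rw [hFext Fa _ (by linarith) (by linarith)]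
          exact hFa1 _ ⟨by linarith, by linarith⟩ (by linarith)
        have := hsupp ε hε0
        rw [e1, e2] at this
        exact lt_irrefl _ this
      · by_contra h
        push_neg at h
        set ε := (t - tb) / 2 with hε
        have hε0 : 0 < ε := div_pos (by linarith) two_pos
        have e1 : Fext T Fa (t - ε) = 1 := by
          rw [hFext Fa _ (by linarith) (by linarith)]
          exact hFa3 _ ⟨by linarith, by linarith⟩ (by linarith)
        have e2 : Fext T Fa (t + ε) = 1 := by
          rcases le_or_gt (t + ε) T with hle | hgt
          · rw [hFext Fa _ (by linarith) hle]
            exact hFa3 _ ⟨by linarith, hle⟩ (by linarith)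
          · rw [hFextGT Fa _ hgt]
            exact hFa3 T ⟨hT0, le_rfl⟩ htbT.le
        have := hsupp ε hε0
        rw [e1, e2] at this
        exact lt_irrefl _ this
  have suppB : ∀ t ∈ fluidSupport T Fb, cost la lb mub Fa Fb t = la - mub * tb := by
    intro t ht
    obtain ⟨htIcc, hsupp⟩ := ht
    obtain ⟨htl, htr⟩ := htIcc
    have htb' : tb ≤ t := by
      by_contra h
      push_neg at h
      set ε := (tb - t) / 2 with hε
      have hε0 : 0 < ε := div_pos (by linarith) two_pos
      have e1 : Fext T Fb (t - ε) = 0 := by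
        rcases lt_or_ge (t - ε) 0 with hneg | hpos
        · exact hFextNeg Fb _ hneg
        · rw [hFext Fb _ hpos (by linarith)]
          exact hFb1 _ ⟨hpos, by linarith⟩ (by linarith)
      have e2 : Fext T Fb (t + ε) = 0 := by
        rw [hFext Fb _ (by linarith) (by linarith)]
        exact hFb1 _ ⟨by linarith, by linarith⟩ (by linarith)
      have := hsupp ε hε0
      rw [e1, e2] at this
      exact lt_irrefl _ this
    have h0 : t ≠ 0 := by
      intro h
      rw [h] at htb'
      exact absurd htb' (not_le.mpr htb0)
    unfold cost; rw [if_neg h0]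
    exact partB1 t ⟨htb', htr⟩
  refine ⟨halpha0, halpha1, hta0, htatb, htbT, hFatb, hFbT,
    by rw [hFa0, hFb0]; ring, partA1, partA2, partB1, partB2, qfin, ?_, ?_⟩
  · intro t ht s hs
    exact le_trans (le_of_eq (suppA t ht)) (costA_ge s hs)
  · intro t ht s hs
    exact le_trans (le_of_eq (suppB t ht)) (costB_ge s hs)
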